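/- Let a, b : ℕ → ℝ be nonincreasing sequences of nonnegative real numbers. If a is multiplicatively majorized by b, then a is weakly majorized by b; that is, if ∏_{i=1}^n (1+a_i) ≤ ∏_{i=1}^n (1+b_i) for every n, then ∑_{i=1}^n a_i ≤ ∑_{i=1}^n b_i for every n. -/

import Mathlib

/-- Abel summation: if `c` is antitone and nonnegative and the partial sums of `d`
are nonnegative, then the partial sums of `c * d` are nonnegative. -/
lemma abel_nonneg (c d : ℕ → ℝ) (hc : Antitone c) (hc0 : ∀ i, 0 ≤ c i)
    (hd : ∀ n, 0 ≤ ∑ i ∈ Finset.range n, d i) (n : ℕ) :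
    0 ≤ ∑ i ∈ Finset.range n, c i * d i := by
  have h := Finset.sum_range_by_parts c d n
  simp only [smul_eq_mul] at h
  rw [h]
  have h1 : 0 ≤ c (n - 1) * ∑ i ∈ Finset.range n, d i :=
    mul_nonneg (hc0 _) (hd n)
  have h2 : ∑ i ∈ Finset.range (n - 1), (c (i + 1) - c i) * ∑ j ∈ Finset.range (i + 1), d j ≤ 0 := by
    apply Finset.sum_nonpos
    intro i _
    exact mul_nonpos_of_nonpos_of_nonneg (sub_nonpos.2 (hc (Nat.le_succ i))) (hd (i + 1))
  linarith

/-- For nonincreasing nonnegative sequences, multiplicative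
majorization implies weak majorization. -/
theorem stmt_11 (a b : ℕ → ℝ) (ha_mono : Antitone a) (hb_mono : Antitone b)
    (ha : ∀ i, 0 ≤ a i) (hb : ∀ i, 0 ≤ b i)
    (hmaj : ∀ n : ℕ, ∏ i ∈ Finset.range n, (1 + a i) ≤ ∏ i ∈ Finset.range n, (1 + b i)) :
    ∀ n : ℕ, ∑ i ∈ Finset.range n, a i ≤ ∑ i ∈ Finset.range n, b i := by
  intro n
  set u : ℕ → ℝ := fun i => Real.log (1 + a i) with hu
  set v : ℕ → ℝ := fun i => Real.log (1 + b i) with hv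
  have hpa : ∀ i, (0:ℝ) < 1 + a i := fun i => by linarith [ha i]
  have hpb : ∀ i, (0:ℝ) < 1 + b i := fun i => by linarith [hb i]
  have hexp_u : ∀ i, Real.exp (u i) = 1 + a i := fun i => Real.exp_log (hpa i)
  have hexp_v : ∀ i, Real.exp (v i) = 1 + b i := fun i => Real.exp_log (hpb i)
  -- partial sums of (v - u) are nonnegative
  have hsum : ∀ m, 0 ≤ ∑ i ∈ Finset.range m, (v i - u i) := by
    intro m
    rw [Finset.sum_sub_distrib, sub_nonneg, hu, hv]
    rw [← Real.log_prod (s := Finset.range m) (f := fun i => 1 + a i) (fun i _ => (hpa i).ne'),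
        ← Real.log_prod (s := Finset.range m) (f := fun i => 1 + b i) (fun i _ => (hpb i).ne')]
    exact Real.log_le_log (Finset.prod_pos (fun i _ => hpa i)) (hmaj m)
  -- pointwise: b i - a i ≥ (1 + a i) * (v i - u i)
  have hpt : ∀ i, (1 + a i) * (v i - u i) ≤ b i - a i := by
    intro i
    have h := Real.add_one_le_exp (v i - u i)
    have h2 : Real.exp (u i) * (v i - u i + 1) ≤ Real.exp (u i) * Real.exp (v i - u i) :=
      mul_le_mul_of_nonneg_left h (Real.exp_nonneg _)
    rw [← Real.exp_add] at h2
    rw [add_sub_cancel] at h2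
    rw [hexp_u, hexp_v] at h2
    nlinarith [h2]
  -- Abel
  have habel := abel_nonneg (fun i => 1 + a i) (fun i => v i - u i)
    (fun i j hij => by simpa using ha_mono hij) (fun i => (hpa i).le) hsum n
  calc ∑ i ∈ Finset.range n, a i
      ≤ ∑ i ∈ Finset.range n, a i + ∑ i ∈ Finset.range n, (1 + a i) * (v i - u i) := by
        linarith [habel]
    _ ≤ ∑ i ∈ Finset.range n, b i := by
        rw [← Finset.sum_add_distrib]
        apply Finset.sum_le_sum
        intro i _
        linarith [hpt i]
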